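/- Let f: R → S be a homological ring epimorphism (i.e., S ⊗_R S ≅ S via multiplication and Tor_1^R(S,S) = 0, where we assume weak global dimension of R at most 1). Then the essential image of the restriction functor Mod-S → Mod-R is closed under extensions: if 0 → X → Y → Z → 0 is exact in Mod-R with X, Z admitting S-module structures compatible with f, then Y admits such a structure. -/

import Mathlib

open CategoryTheory TensorProduct

universe u

/-- `f : R → S` is an epimorphism in the category of rings. -/
def IsRingEpi {R S : Type u} [Ring R] [Ring S] (f : R →+* S) : Prop :=
  ∀ (T : Type u) [Ring T], ∀ g₁ g₂ : S →+* T, g₁.comp f = g₂.comp f → g₁ = g₂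

/-- `Tor_i^R(M, N) = 0`. -/
def TorIsZero (R : Type u) [CommRing R] (i : ℕ)
    (M N : Type u) [AddCommGroup M] [Module R M] [AddCommGroup N] [Module R N] : Prop :=
  Limits.IsZero (((Tor (ModuleCat.{u} R) i).obj (ModuleCat.of R M)).obj (ModuleCat.of R N))

/-- `R` has weak global dimension at most one: `Tor_2^R` vanishes identically. -/
def WeakGlobalDimLE1 (R : Type u) [CommRing R] : Prop :=
  ∀ M N : ModuleCat.{u} R, Limits.IsZero (((Tor (ModuleCat.{u} R) 2).obj M).obj N)

/-- A homological ring epimorphism: a ring epimorphism with `Tor_i^R(S,S) = 0` for `i ≥ 1`. -/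
def IsHomologicalEpi (R S : Type u) [CommRing R] [CommRing S] [Algebra R S] : Prop :=
  IsRingEpi (algebraMap R S) ∧ ∀ i : ℕ, 1 ≤ i → TorIsZero R i S S

/-- An `R`-module `M` lies in the essential image of restriction of scalars along
`R → S`, i.e. the natural map `M → M ⊗_R S`, `m ↦ m ⊗ 1`, is an isomorphism. -/
def InRestrictionImage (R S : Type u) [CommRing R] [CommRing S] [Algebra R S]
    (M : Type u) [AddCommGroup M] [Module R M] : Prop :=
  Function.Bijective ((TensorProduct.mk R M S).flip 1)


section AuxLemmas
variable {R S : Type u} [CommRing R] [CommRing S] [Algebra R S]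

theorem one_tmul_eq (hmul : Function.Injective (LinearMap.mul' R S)) (s : S) :
    s ⊗ₜ[R] (1 : S) = (1 : S) ⊗ₜ[R] s := by
  apply hmul
  simp [LinearMap.mul'_apply]

/-- key: for an S-module M, (s • m) ⊗ 1 = m ⊗ s -/
theorem smul_tmul_one (hmul : Function.Injective (LinearMap.mul' R S))
    {M : Type u} [AddCommGroup M] [Module R M] [Module S M] [IsScalarTower R S M]
    (m : M) (s : S) : (s • m) ⊗ₜ[R] (1 : S) = m ⊗ₜ[R] s := by
  let φ : S ⊗[R] S →ₗ[R] M ⊗[R] S := TensorProduct.lift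
    (LinearMap.mk₂ R (fun a b => (a • m) ⊗ₜ[R] b)
      (fun a a' b => by simp only [add_smul, add_tmul])
      (fun c a b => by simp only [smul_assoc, smul_tmul'])
      (fun a b b' => by simp only [tmul_add])
      (fun c a b => by simp only [tmul_smul]))
  have h := congrArg φ (one_tmul_eq hmul s)
  simp only [φ, TensorProduct.lift.tmul] at h
  have h' : (s • m) ⊗ₜ[R] (1:S) = ((1:S) • m) ⊗ₜ[R] s := h
  rwa [one_smul] at h'

/-- Lemma A: if `M` is an `S`-module then `m ↦ m ⊗ 1` is bijective. -/
theorem bijective_mk_of_module (hmul : Function.Injective (LinearMap.mul' R S))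
    (M : Type u) [AddCommGroup M] [Module R M] [Module S M] [IsScalarTower R S M] :
    Function.Bijective ((TensorProduct.mk R M S).flip 1) := by
  let act : M ⊗[R] S →ₗ[R] M := TensorProduct.lift
    (LinearMap.mk₂ R (fun m s => s • m)
      (fun m m' s => by simp only [smul_add])
      (fun c m s => by exact smul_comm s c m)
      (fun m s s' => by simp only [add_smul])
      (fun c m s => by simp only [smul_assoc]))
  have hact : ∀ m : M, act (m ⊗ₜ[R] 1) = m := fun m => by simp [act]
  constructor
  · intro a b h
    have := congrArg act h
    simpa [hact] using this
  · intro t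
    refine ⟨act t, ?_⟩
    induction t with
    | zero => simp
    | tmul m s => simpa [act] using smul_tmul_one hmul m s
    | add x y hx hy =>
        rw [map_add, map_add, hx, hy]

theorem rTensor_injective_of_bijective (hmul : Function.Injective (LinearMap.mul' R S))
    {M N : Type u} [AddCommGroup M] [Module R M] [AddCommGroup N] [Module R N]
    (hM : Function.Bijective ((TensorProduct.mk R M S).flip 1))
    (hN : Function.Bijective ((TensorProduct.mk R N S).flip 1))
    (f : M →ₗ[R] N) (hf : Function.Injective f) :
    Function.Injective (LinearMap.rTensor S f) := by
  rw [← LinearMap.ker_eq_bot]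
  rw [Submodule.eq_bot_iff]
  intro t ht
  obtain ⟨m, rfl⟩ := hM.2 t
  have : ((TensorProduct.mk R N S).flip 1) (f m) = 0 := by
    simpa using ht
  have hm : f m = 0 := by
    apply hN.1
    simpa using this
  have : m = 0 := hf (by simpa using hm)
  simp [this]

theorem rTensor_ker_subtype_injective (hmul : Function.Injective (LinearMap.mul' R S))
    {F Z : Type u} [AddCommGroup F] [Module R F] [Module S F] [IsScalarTower R S F]
    [AddCommGroup Z] [Module R Z] [Module S Z] [IsScalarTower R S Z]
    (π : F →ₗ[S] Z) :
    Function.Injective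
      (LinearMap.rTensor S ((LinearMap.ker π).restrictScalars R).subtype) := by
  have hgF : Function.Bijective ((TensorProduct.mk R F S).flip 1) :=
    bijective_mk_of_module hmul F
  have hgK : Function.Bijective
      ((TensorProduct.mk R ↥((LinearMap.ker π).restrictScalars R) S).flip 1) :=
    bijective_mk_of_module hmul _
  exact rTensor_injective_of_bijective hmul hgK hgF _ Subtype.val_injective

set_option maxHeartbeats 1000000 in
theorem exists_good_presentation
    (hmul : Function.Injective (LinearMap.mul' R S))
    (B : Type u) [AddCommGroup B] [Module R B] (hB : Module.Projective R B)
    (qB : B →ₗ[R] S) (hqB : Function.Surjective qB)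
    (hkB : Function.Injective (LinearMap.rTensor S (LinearMap.ker qB).subtype))
    (Z : Type u) [AddCommGroup Z] [Module R Z]
    (hZ : Function.Bijective ((TensorProduct.mk R Z S).flip 1)) :
    ∃ (G : Type u) (_ : AddCommGroup G) (_ : Module R G),
      Module.Projective R G ∧ ∃ qG : G →ₗ[R] Z, Function.Surjective qG ∧
        Function.Injective (LinearMap.rTensor S (LinearMap.ker qG).subtype) := by
  classical
  set e : Z ≃ₗ[R] Z ⊗[R] S := LinearEquiv.ofBijective _ hZ with he
  have he_apply : ∀ z : Z, e z = z ⊗ₜ[R] 1 := fun z => rfl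
  letI : SMul S Z := ⟨fun s z => e.symm (z ⊗ₜ s)⟩
  have hsmul : ∀ (s : S) (z : Z), s • z = e.symm (z ⊗ₜ[R] s) := fun _ _ => rfl
  have hsmul' : ∀ (s : S) (z : Z), e (s • z) = z ⊗ₜ[R] s := by
    intro s z; rw [hsmul]; exact e.apply_symm_apply _
  have hmulkey : ∀ (s t : S) (z : Z), (s * t) • z = s • (t • z) := by
    intro s t z
    have h1 : (t • z) ⊗ₜ[R] (1 : S) = z ⊗ₜ[R] t := by rw [← he_apply, hsmul']
    have h2 := congrArg (LinearMap.lTensor Z (LinearMap.mulRight R s)) h1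
    simp only [LinearMap.lTensor_tmul, LinearMap.mulRight_apply, one_mul] at h2
    rw [hsmul s (t • z), h2, mul_comm t s, ← hsmul]
  letI : MulAction S Z :=
  { one_smul := fun z => by rw [hsmul, ← he_apply, e.symm_apply_apply]
    mul_smul := hmulkey }
  letI : DistribMulAction S Z :=
  { smul_zero := fun s => by rw [hsmul, zero_tmul, map_zero]
    smul_add := fun s z z' => by rw [hsmul, hsmul, hsmul, add_tmul, map_add] }
  letI : Module S Z :=
  { add_smul := fun s t z => by rw [hsmul, hsmul, hsmul, tmul_add, map_add]
    zero_smul := fun z => by rw [hsmul, tmul_zero, map_zero] }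
  letI : IsScalarTower R S Z := ⟨fun r s z => by
    rw [hsmul, hsmul, tmul_smul, map_smul]⟩
  -- the S-free cover of Z
  set π : (Z →₀ S) →ₗ[S] Z := Finsupp.linearCombination S (id : Z → Z) with hπ
  have hπsurj : Function.Surjective π := by
    intro z; exact ⟨Finsupp.single z 1, by simp [hπ]⟩
  set K : Submodule S (Z →₀ S) := LinearMap.ker π with hK
  set K' : Submodule R (Z →₀ S) := K.restrictScalars R with hK'
  have hinjK : Function.Injective (LinearMap.rTensor S K'.subtype) :=
    rTensor_ker_subtype_injective hmul π
  -- the projective cover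
  letI : Module.Projective R B := hB
  refine ⟨Z →₀ B, inferInstance, inferInstance, ?_, ?_⟩
  · exact Module.Projective.of_equiv (finsuppLequivDFinsupp (M := B) (ι := Z) R).symm
  set A : Submodule R B := LinearMap.ker qB with hA
  set Φ : (Z →₀ B) →ₗ[R] (Z →₀ S) := Finsupp.mapRange.linearMap qB with hΦ
  have hΦsurj : Function.Surjective Φ := by
    intro ξ
    obtain ⟨η, hη⟩ := Finsupp.mapRange_surjective (α := Z) (⇑qB) (map_zero qB) hqB ξ
    exact ⟨η, by rw [hΦ]; exact hη⟩
  set πR : (Z →₀ S) →ₗ[R] Z := π.restrictScalars R with hπR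
  refine ⟨πR ∘ₗ Φ, (fun z => by
      obtain ⟨f, hf⟩ := hπsurj z
      obtain ⟨g, hg⟩ := hΦsurj f
      exact ⟨g, by simp [hg, hπR, hf]⟩), ?_⟩
  set qG : (Z →₀ B) →ₗ[R] Z := πR ∘ₗ Φ with hqG
  set M : Submodule R (Z →₀ B) := LinearMap.ker qG with hM
  have hmemK : ∀ m : ↥M, Φ ↑m ∈ K' := by
    intro m
    have h : πR (Φ ↑m) = 0 := m.2
    rw [hK', Submodule.restrictScalars_mem, hK, LinearMap.mem_ker]
    exact h
  set r : ↥M →ₗ[R] ↥K' := (Φ ∘ₗ M.subtype).codRestrict K' hmemK with hr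
  have hrsurj : Function.Surjective r := by
    intro k
    obtain ⟨a, ha⟩ := hΦsurj ↑k
    have hak : πR ↑k = 0 := by
      have : (k : Z →₀ S) ∈ K := k.2
      simpa [hK, LinearMap.mem_ker, hπR] using this
    have haM : a ∈ M := by
      simp only [hM, LinearMap.mem_ker, hqG, LinearMap.comp_apply, ha, hak]
    exact ⟨⟨a, haM⟩, Subtype.ext (by simp [hr, LinearMap.codRestrict, ha])⟩
  -- the map u from Z →₀ A
  set uraw : (Z →₀ ↥A) →ₗ[R] (Z →₀ B) := Finsupp.mapRange.linearMap A.subtype with hu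
  have hΦu : ∀ ξ, Φ (uraw ξ) = 0 := by
    intro ξ
    ext z
    simp [hΦ, hu, Finsupp.mapRange.linearMap_apply, Finsupp.mapRange_apply,
      LinearMap.map_coe_ker]
  have humem : ∀ ξ, uraw ξ ∈ M := by
    intro ξ
    simp only [hM, LinearMap.mem_ker, hqG, LinearMap.comp_apply, hΦu, map_zero]
  set uM : (Z →₀ ↥A) →ₗ[R] ↥M := uraw.codRestrict M humem with huM
  have hexact : Function.Exact uM r := by
    intro m
    constructor
    · intro hm
      have hΦm : Φ ↑m = 0 := by
        have := congrArg (Subtype.val) hm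
        simpa [hr, LinearMap.codRestrict] using this
      have hmem : ∀ z, (m : Z →₀ B) z ∈ A := by
        intro z
        have : (Φ ↑m) z = 0 := by rw [hΦm]; rfl
        simpa [hΦ, Finsupp.mapRange.linearMap_apply, Finsupp.mapRange_apply, hA,
          LinearMap.mem_ker] using this
      refine ⟨⟨(m : Z →₀ B).support, fun z => ⟨(m : Z →₀ B) z, hmem z⟩, ?_⟩, ?_⟩
      · intro z
        simp [Finsupp.mem_support_iff, Subtype.ext_iff]
      · apply Subtype.ext
        apply Finsupp.ext
        intro z
        simp [huM, LinearMap.codRestrict, hu, Finsupp.mapRange.linearMap_apply,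
          Finsupp.mapRange_apply]
    · rintro ⟨ξ, rfl⟩
      apply Subtype.ext
      have : Φ (uraw ξ) = 0 := hΦu ξ
      simp [hr, huM, LinearMap.codRestrict, this]
  have hexact_t := @rTensor_exact R (Z →₀ ↥A) ↥M ↥K' _ _ _ _ _ _ _ uM r S _ _ hexact hrsurj
  -- final injectivity
  rw [← LinearMap.ker_eq_bot]
  rw [Submodule.eq_bot_iff]
  intro τ hτ
  rw [LinearMap.mem_ker] at hτ
  have h1 : LinearMap.rTensor S r τ = 0 := by
    apply hinjK
    have : LinearMap.rTensor S K'.subtype (LinearMap.rTensor S r τ)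
        = LinearMap.rTensor S Φ (LinearMap.rTensor S M.subtype τ) := by
      rw [← LinearMap.comp_apply, ← LinearMap.rTensor_comp, ← LinearMap.comp_apply,
        ← LinearMap.rTensor_comp]
      rfl
    simp only [this, hτ, map_zero]
  obtain ⟨σ, hσ⟩ := (hexact_t _).mp h1
  have h2 : LinearMap.rTensor S uraw σ = 0 := by
    have : LinearMap.rTensor S uraw σ = LinearMap.rTensor S M.subtype τ := by
      rw [← hσ, ← LinearMap.comp_apply, ← LinearMap.rTensor_comp,
        LinearMap.subtype_comp_codRestrict]
    rw [this, hτ]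
  -- conjugate by finsuppLeft
  have hconj : ∀ t : (Z →₀ ↥A) ⊗[R] S,
      finsuppLeft R R B S Z (LinearMap.rTensor S uraw t)
        = Finsupp.mapRange.linearMap (LinearMap.rTensor S A.subtype)
            (finsuppLeft R R ↥A S Z t) := by
    intro t
    induction t with
    | zero => simp
    | tmul ξ s =>
        apply Finsupp.ext
        intro z
        simp [hu, Finsupp.mapRange.linearMap_apply, Finsupp.mapRange_apply]
    | add x y hx hy => simp [map_add, hx, hy]
  have h3 : Finsupp.mapRange.linearMap (LinearMap.rTensor S A.subtype)
      (finsuppLeft R R ↥A S Z σ) = 0 := by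
    rw [← hconj, h2, map_zero]
  have h4 : finsuppLeft R R ↥A S Z σ = 0 := by
    apply Finsupp.mapRange_injective (⇑(LinearMap.rTensor S A.subtype)) (map_zero _) hkB
    rw [Finsupp.mapRange.linearMap_apply] at h3
    simpa using h3
  have h5 : σ = 0 := by
    have := congrArg (finsuppLeft R R ↥A S Z).symm h4
    simpa using this
  rw [← hσ, h5, map_zero]

theorem exists_tc (htor : TorIsZero R 1 S S) :
    ∃ (B : Type u) (_ : AddCommGroup B) (_ : Module R B), Module.Projective R B ∧
      ∃ qB : B →ₗ[R] S, Function.Surjective qB ∧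
        Function.Injective (LinearMap.lTensor S (LinearMap.ker qB).subtype) := by
  classical
  obtain ⟨P⟩ : Nonempty (ProjectiveResolution (ModuleCat.of R S)) :=
    (HasProjectiveResolution.out (Z := ModuleCat.of R S)).some |> fun p => ⟨p⟩
  set F := (CategoryTheory.MonoidalCategory.tensoringLeft (ModuleCat.{u} R)).obj
    (ModuleCat.of R S) with hF
  have hz1 : Limits.IsZero ((F.leftDerived 1).obj (ModuleCat.of R S)) := htor
  have hz2 : Limits.IsZero
      ((HomologicalComplex.homologyFunctor _ _ 1).obj
        ((F.mapHomologicalComplex _).obj P.complex)) :=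
    Limits.IsZero.of_iso hz1 (P.isoLeftDerivedObj F 1).symm
  have hex1 : ((F.mapHomologicalComplex _).obj P.complex).ExactAt 1 :=
    (HomologicalComplex.exactAt_iff_isZero_homology _ _).2 hz2
  have hex1' := (HomologicalComplex.exactAt_iff' ((F.mapHomologicalComplex _).obj P.complex)
    2 1 0 (by simp) (by simp)).1 hex1
  rw [ShortComplex.moduleCat_exact_iff] at hex1'
  -- degree-zero exactness of resolution
  set q : P.complex.X 0 ⟶ ModuleCat.of R S := P.π.f 0 with hq
  have hqsurj : Function.Surjective q := (ModuleCat.epi_iff_surjective (P.π.f 0)).1 inferInstance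
  have hexact0 := ShortComplex.exact_of_g_is_cokernel
    (ShortComplex.mk (P.complex.d 1 0) q P.complex_d_comp_π_f_zero)
    P.isColimitCokernelCofork
  rw [ShortComplex.moduleCat_exact_iff] at hexact0
  -- now do the concrete chase
  have hprojB : Module.Projective R ↥(P.complex.X 0) := by
    rw [IsProjective.iff_projective]
    have := P.projective 0
    rwa [ModuleCat.of_coe]
  set qB : ↥(P.complex.X 0) →ₗ[R] S := q.hom with hqB
  refine ⟨↥(P.complex.X 0), inferInstance, inferInstance, hprojB, qB, hqsurj, ?_⟩
  set A : Submodule R ↥(P.complex.X 0) := LinearMap.ker qB with hA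
  set d1 : ↥(P.complex.X 1) →ₗ[R] ↥(P.complex.X 0) := (P.complex.d 1 0).hom with hd1
  set d2 : ↥(P.complex.X 2) →ₗ[R] ↥(P.complex.X 1) := (P.complex.d 2 1).hom with hd2
  have hd1A : ∀ y, d1 y ∈ A := by
    intro y
    have h3 : (P.complex.d 1 0 ≫ P.π.f 0) y = 0 := by
      rw [P.complex_d_comp_π_f_zero]; rfl
    exact LinearMap.mem_ker.mpr h3
  set e : ↥(P.complex.X 1) →ₗ[R] ↥A := d1.codRestrict A hd1A with he
  have hesurj : Function.Surjective e := by
    intro a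
    obtain ⟨y, hy⟩ := hexact0 ↑a a.2
    exact ⟨y, Subtype.ext hy⟩
  have hed : ∀ z, e (d2 z) = 0 := by
    intro z
    apply Subtype.val_injective
    have h3 : (P.complex.d 2 1 ≫ P.complex.d 1 0) z = 0 := by
      rw [P.complex.d_comp_d]; rfl
    exact h3
  -- injectivity
  rw [← LinearMap.ker_eq_bot, Submodule.eq_bot_iff]
  intro τ hτ
  rw [LinearMap.mem_ker] at hτ
  obtain ⟨τ', rfl⟩ := LinearMap.lTensor_surjective S hesurj τ
  have h1 : LinearMap.lTensor S d1 τ' = 0 := by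
    have : LinearMap.lTensor S d1 τ'
        = LinearMap.lTensor S A.subtype (LinearMap.lTensor S e τ') := by
      rw [← LinearMap.comp_apply, ← LinearMap.lTensor_comp,
        LinearMap.subtype_comp_codRestrict]
    rw [this, hτ]
  -- use Tor-vanishing exactness
  obtain ⟨σ, hσ⟩ : ∃ σ : S ⊗[R] ↑(P.complex.X 2), LinearMap.lTensor S d2 σ = τ' :=
    by obtain ⟨x, hx⟩ := hex1' (by exact τ') (by exact h1); exact ⟨x, hx⟩
  have h2 : LinearMap.lTensor S e τ' = 0 := by
    have hστ : LinearMap.lTensor S d2 σ = τ' := hσ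
    rw [← hστ, ← LinearMap.comp_apply, ← LinearMap.lTensor_comp]
    have : e ∘ₗ d2 = 0 := by
      ext z; simpa using congrArg Subtype.val (hed z)
    rw [this]
    simp
  rw [h2]

theorem rTensor_injective_of_lTensor_injective
    {M N : Type u} [AddCommGroup M] [Module R M] [AddCommGroup N] [Module R N]
    (f : M →ₗ[R] N) (h : Function.Injective (LinearMap.lTensor S f)) :
    Function.Injective (LinearMap.rTensor S f) := by
  have hcomm : ∀ t : M ⊗[R] S, (TensorProduct.comm R N S) (LinearMap.rTensor S f t)
      = LinearMap.lTensor S f ((TensorProduct.comm R M S) t) := by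
    intro t
    induction t with
    | zero => simp
    | tmul m s => simp
    | add x y hx hy => simp [map_add, hx, hy]
  intro a b hab
  have : (TensorProduct.comm R M S) a = (TensorProduct.comm R M S) b := by
    apply h
    rw [← hcomm, ← hcomm, hab]
  exact (TensorProduct.comm R M S).injective this

theorem main_assembly
    (hmul : Function.Bijective (LinearMap.mul' R S))
    (X Y Z : Type u) [AddCommGroup X] [Module R X] [AddCommGroup Y] [Module R Y]
    [AddCommGroup Z] [Module R Z] (i : X →ₗ[R] Y) (p : Y →ₗ[R] Z)
    (hi : Function.Injective i) (hp : Function.Surjective p)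
    (hrange : LinearMap.range i = LinearMap.ker p)
    (hX : Function.Bijective ((TensorProduct.mk R X S).flip 1))
    (hZ : Function.Bijective ((TensorProduct.mk R Z S).flip 1))
    (G : Type u) [AddCommGroup G] [Module R G] (hGproj : Module.Projective R G)
    (qG : G →ₗ[R] Z) (hqGsurj : Function.Surjective qG)
    (hkerinj : Function.Injective (LinearMap.rTensor S (LinearMap.ker qG).subtype)) :
    Function.Bijective ((TensorProduct.mk R Y S).flip 1) := by
  classical
  have happ : ∀ (W : Type u) (_ : AddCommGroup W) (_ : Module R W) (w : W),
      ((TensorProduct.mk R W S).flip 1) w = w ⊗ₜ[R] 1 := fun _ _ _ _ => rfl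
  letI : Module.Projective R G := hGproj
  obtain ⟨lam, hlam⟩ := Module.projective_lifting_property p qG hp
  have hlam' : ∀ g : G, p (lam g) = qG g := fun g => by
    rw [← hlam]; rfl
  set M : Submodule R G := LinearMap.ker qG with hM
  have hmemX : ∀ m : ↥M, lam ↑m ∈ LinearMap.range i := by
    intro m
    rw [hrange, LinearMap.mem_ker, hlam']
    exact m.2
  set eX : X ≃ₗ[R] ↥(LinearMap.range i) := LinearEquiv.ofInjective i hi with heX
  set μ : ↥M →ₗ[R] X :=
    eX.symm.toLinearMap ∘ₗ (lam ∘ₗ M.subtype).codRestrict (LinearMap.range i) hmemX with hμdef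
  have hμ : ∀ m : ↥M, i (μ m) = lam ↑m := by
    intro m
    have h1 : ∀ a : ↥(LinearMap.range i), i (eX.symm a) = ↑a := by
      intro a
      have h2 := eX.apply_symm_apply a
      have h3 : (eX (eX.symm a) : Y) = i (eX.symm a) := by
        rw [heX]; rfl
      rw [← h3, h2]
    exact h1 _
  set j : ↥M →ₗ[R] G × X := M.subtype.prod (-μ) with hj
  set mY : G × X →ₗ[R] Y :=
    lam ∘ₗ LinearMap.fst R G X + i ∘ₗ LinearMap.snd R G X with hmY
  have hmYapp : ∀ (a : G) (x : X), mY (a, x) = lam a + i x := fun a x => rfl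
  have hexact : Function.Exact j mY := by
    intro w
    constructor
    · intro hw
      obtain ⟨a, x⟩ := w
      rw [hmYapp] at hw
      have hpa : qG a = 0 := by
        have h4 := congrArg p hw
        rw [map_add, hlam', map_zero] at h4
        have h5 : p (i x) = 0 := by
          have : i x ∈ LinearMap.ker p := by rw [← hrange]; exact ⟨x, rfl⟩
          exact this
        rw [h5, add_zero] at h4
        exact h4
      have hμm : μ ⟨a, hpa⟩ = -x := by
        apply hi
        rw [hμ, map_neg]
        have : lam a = -(i x) := by
          rw [eq_neg_iff_add_eq_zero]; exact hw
        exact this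
      exact ⟨⟨a, hpa⟩, by
        rw [hj]
        apply Prod.ext
        · rfl
        · show -μ ⟨a, hpa⟩ = x
          rw [hμm, neg_neg]⟩
    · rintro ⟨m, rfl⟩
      have : j m = (↑m, -μ m) := rfl
      rw [this, hmYapp, map_neg, hμ]
      exact add_neg_cancel _
  have hmYsurj : Function.Surjective mY := by
    intro y
    obtain ⟨a, ha⟩ := hqGsurj (p y)
    have : p (y - lam a) = 0 := by rw [map_sub, hlam', ha, sub_self]
    have hmem : y - lam a ∈ LinearMap.range i := by rw [hrange]; exact this
    obtain ⟨x, hx⟩ := hmem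
    exact ⟨(a, x), by rw [hmYapp, hx]; abel⟩
  have ht := rTensor_exact (M := ↥M) S hexact hmYsurj
  have hexact_ip : Function.Exact i p := by
    rw [LinearMap.exact_iff]; exact hrange.symm
  have ht_ip := rTensor_exact (M := X) S hexact_ip hp
  constructor
  · -- injectivity
    rw [← LinearMap.ker_eq_bot, Submodule.eq_bot_iff]
    intro y hy
    rw [LinearMap.mem_ker, happ] at hy
    have hpy : p y = 0 := by
      apply hZ.1
      rw [happ, happ Z _ _ 0]
      have : LinearMap.rTensor S p (y ⊗ₜ[R] 1) = (p y) ⊗ₜ[R] 1 := rfl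
      rw [← this, hy, map_zero, zero_tmul]
    have hyr : y ∈ LinearMap.range i := by rw [hrange]; exact hpy
    obtain ⟨x, rfl⟩ := hyr
    set w : (G × X) ⊗[R] S := LinearMap.rTensor S (LinearMap.inr R G X) (x ⊗ₜ[R] 1) with hw
    have hmYinr : mY ∘ₗ LinearMap.inr R G X = i := by
      ext x'; simp [hmY]
    have hw0 : LinearMap.rTensor S mY w = 0 := by
      rw [hw, ← LinearMap.comp_apply, ← LinearMap.rTensor_comp, hmYinr]
      have : LinearMap.rTensor S i (x ⊗ₜ[R] (1:S)) = (i x) ⊗ₜ[R] 1 := rfl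
      rw [this, hy]
    obtain ⟨τ, hτ⟩ := (ht w).mp hw0
    have hfstj : LinearMap.fst R G X ∘ₗ j = M.subtype := by
      ext m; simp [hj]
    have hfstinr : LinearMap.fst R G X ∘ₗ LinearMap.inr R G X = 0 := by
      ext x'; simp
    have hτ0 : LinearMap.rTensor S M.subtype τ = 0 := by
      rw [← hfstj, LinearMap.rTensor_comp, LinearMap.comp_apply, hτ, hw,
        ← LinearMap.comp_apply, ← LinearMap.rTensor_comp, hfstinr]
      simp
    have hτz : τ = 0 := by
      apply hkerinj
      rw [hτ0, map_zero]
    have hwz : w = 0 := by rw [← hτ, hτz, map_zero]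
    have hsndinr : LinearMap.snd R G X ∘ₗ LinearMap.inr R G X = LinearMap.id := by
      ext x'; simp
    have hx1 : x ⊗ₜ[R] (1:S) = 0 := by
      have h6 : LinearMap.rTensor S (LinearMap.snd R G X) w = x ⊗ₜ[R] 1 := by
        rw [hw, ← LinearMap.comp_apply, ← LinearMap.rTensor_comp, hsndinr,
          LinearMap.rTensor_id]
        rfl
      rw [hwz, map_zero] at h6
      exact h6.symm
    have : x = 0 := by
      apply hX.1
      rw [happ, happ X _ _ 0, hx1, zero_tmul]
    rw [this, map_zero]
  · -- surjectivity
    intro t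
    obtain ⟨z, hz⟩ := hZ.2 (LinearMap.rTensor S p t)
    rw [happ] at hz
    obtain ⟨y0, hy0⟩ := hp z
    have hker : LinearMap.rTensor S p (t - y0 ⊗ₜ[R] 1) = 0 := by
      rw [map_sub]
      have : LinearMap.rTensor S p (y0 ⊗ₜ[R] (1:S)) = (p y0) ⊗ₜ[R] 1 := rfl
      rw [this, hy0, hz, sub_self]
    obtain ⟨ξ, hξ⟩ := (ht_ip _).mp hker
    obtain ⟨x, hx⟩ := hX.2 ξ
    rw [happ] at hx
    have h7 : (i x) ⊗ₜ[R] (1:S) = t - y0 ⊗ₜ[R] 1 := by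
      have h8 : LinearMap.rTensor S i (x ⊗ₜ[R] (1:S)) = (i x) ⊗ₜ[R] 1 := rfl
      rw [← h8, hx, hξ]
    refine ⟨y0 + i x, ?_⟩
    rw [happ, add_tmul, h7]
    abel

end AuxLemmas

set_option maxHeartbeats 1000000 in
/-- If `R` has weak global dimension at most one and `R → S` is a homological ring
epimorphism (multiplication `S ⊗_R S → S` bijective and `Tor_1^R(S,S) = 0`), then the
essential image of restriction of scalars along `R → S` is closed under extensions. -/
theorem stmt8 (R S : Type u) [CommRing R] [CommRing S] [Algebra R S]
    (hR : WeakGlobalDimLE1 R)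
    (hmul : Function.Bijective (LinearMap.mul' R S))
    (htor : TorIsZero R 1 S S) :
    ∀ (X Y Z : Type u) [AddCommGroup X] [Module R X] [AddCommGroup Y] [Module R Y]
        [AddCommGroup Z] [Module R Z] (i : X →ₗ[R] Y) (p : Y →ₗ[R] Z),
        Function.Injective i → Function.Surjective p → LinearMap.range i = LinearMap.ker p →
        InRestrictionImage R S X → InRestrictionImage R S Z → InRestrictionImage R S Y := by
  intro X Y Z _ _ _ _ _ _ i p hi hp hrange hX hZ
  obtain ⟨B, iB1, iB2, hB, qB, hqB, hkB⟩ := exists_tc htor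
  letI := iB1; letI := iB2
  have hkB' : Function.Injective (LinearMap.rTensor S (LinearMap.ker qB).subtype) :=
    rTensor_injective_of_lTensor_injective _ hkB
  obtain ⟨G, iG1, iG2, hGproj, qG, hqGsurj, hkerinj⟩ :=
    exists_good_presentation hmul.1 B hB qB hqB hkB' Z hZ
  letI := iG1; letI := iG2
  exact main_assembly hmul X Y Z i p hi hp hrange hX hZ G hGproj qG hqGsurj hkerinj
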